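/- Under the same assumptions as the Penalty Newton contraction (relative smoothness L, relative convexity μ, ∇f(x) ∈ Range(H(x)), G ≻ 0, ρ > 0, K(x) = ((1/ρ)G + H(x))^{-1}), the Augmented Newton iterate x_{k+1} = x_k − K(x_k)[(1/L)∇f(x_k) − (1/ρ)G(x_k − x_{k−1})], assuming additionally G(x_k − x_{k−1}) ∈ Range(H(x_k)), satisfies the Lyapunov decrease: V_{k+1} ≤ (1 − ξμ/L) V_k, where V_k = f(x_k) − f* + (L/(2ρ))·(x_k − x_{k−1})^T G (x_k − x_{k−1}) and ξ is a uniform lower bound on λ_min^+(H(x)^{1/2}K(x)H(x)^{1/2}). -/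

import Mathlib

open Matrix

/-- `t` is an eigenvalue of the matrix `A`. -/
def HasEigen {n : ℕ} (A : Matrix (Fin n) (Fin n) ℝ) (t : ℝ) : Prop :=
  ∃ v : Fin n → ℝ, v ≠ 0 ∧ A.mulVec v = t • v

/-- The smallest nonzero eigenvalue of a matrix. -/
noncomputable def lambdaMinPos {n : ℕ} (A : Matrix (Fin n) (Fin n) ℝ) : ℝ :=
  sInf {t : ℝ | t ≠ 0 ∧ HasEigen A t}

open scoped ComplexOrder in
/-- The positive semidefinite square root of a positive semidefinite matrix
(the definition `Matrix.PosSemidef.sqrt` of the older Mathlib, since removed). -/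
noncomputable def Matrix.PosSemidef.sqrt {m 𝕜 : Type*} [Fintype m] [DecidableEq m] [RCLike 𝕜]
    {A : Matrix m m 𝕜} (hA : A.PosSemidef) : Matrix m m 𝕜 :=
  hA.1.eigenvectorUnitary.1 * diagonal ((↑) ∘ (√·) ∘ hA.1.eigenvalues) *
    (star hA.1.eigenvectorUnitary : Matrix m m 𝕜)

variable {n : ℕ}

lemma Matrix.PosSemidef.posSemidef_sqrt {A : Matrix (Fin n) (Fin n) ℝ} (hA : A.PosSemidef) :
    hA.sqrt.PosSemidef := by
  unfold Matrix.PosSemidef.sqrt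
  have hD : (diagonal (RCLike.ofReal ∘ (√·) ∘ hA.1.eigenvalues) : Matrix (Fin n) (Fin n) ℝ).PosSemidef :=
    posSemidef_diagonal_iff.2 fun i => by simp [Real.sqrt_nonneg]
  have := hD.mul_mul_conjTranspose_same (hA.1.eigenvectorUnitary : Matrix (Fin n) (Fin n) ℝ)
  exact this

lemma Matrix.PosSemidef.sqrt_mul_self {A : Matrix (Fin n) (Fin n) ℝ} (hA : A.PosSemidef) :
    hA.sqrt * hA.sqrt = A := by
  unfold Matrix.PosSemidef.sqrt
  have hU : (star hA.1.eigenvectorUnitary : Matrix (Fin n) (Fin n) ℝ) * hA.1.eigenvectorUnitary = 1 :=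
    Unitary.coe_star_mul_self _
  conv_rhs => rw [hA.1.spectral_theorem, Unitary.conjStarAlgAut_apply]
  rw [show ∀ a b c d e f : Matrix (Fin n) (Fin n) ℝ, a*b*c*(d*e*f) = a*(b*(c*d)*e)*f by
    intros; simp [Matrix.mul_assoc]]
  rw [hU, Matrix.mul_one]
  congr 2
  ext i j
  rw [mul_apply]
  by_cases h : i = j
  · subst h
    simp [diagonal_apply, Real.mul_self_sqrt (hA.eigenvalues_nonneg i)]
  · simp [diagonal_apply, h]

noncomputable def toE (x : Fin n → ℝ) : EuclideanSpace ℝ (Fin n) :=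
  (WithLp.equiv 2 (Fin n → ℝ)).symm x

lemma dot_symm (A : Matrix (Fin n) (Fin n) ℝ) (hA : Aᵀ = A) (x y : Fin n → ℝ) :
    (A *ᵥ x) ⬝ᵥ y = x ⬝ᵥ (A *ᵥ y) := by
  rw [dotProduct_mulVec, ← mulVec_transpose, hA]

lemma inner_eq_dot (x y : Fin n → ℝ) :
    (inner ℝ (toE x) (toE y) : ℝ) = x ⬝ᵥ y := by
  simp [toE, PiLp.inner_apply, dotProduct, mul_comm]

lemma quad_eigen (A : Matrix (Fin n) (Fin n) ℝ) (hA : Aᵀ = A)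
    (u : OrthonormalBasis (Fin n) ℝ (EuclideanSpace ℝ (Fin n))) (a : Fin n → ℝ)
    (hu : ∀ i, A *ᵥ ⇑(u i) = a i • ⇑(u i)) (z : Fin n → ℝ) :
    z ⬝ᵥ A *ᵥ z = ∑ i, a i * ((⇑(u i)) ⬝ᵥ z)^2 := by
  have h1 := u.sum_inner_mul_inner (toE z) (toE (A *ᵥ z))
  rw [inner_eq_dot] at h1
  rw [← h1]
  refine Finset.sum_congr rfl fun i _ => ?_
  have e1 : (inner ℝ (toE z) (u i) : ℝ) = z ⬝ᵥ ⇑(u i) := inner_eq_dot z ⇑(u i)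
  have e2 : (inner ℝ (u i) (toE (A *ᵥ z)) : ℝ) = ⇑(u i) ⬝ᵥ (A *ᵥ z) := inner_eq_dot _ _
  rw [e1, e2, ← dot_symm A hA, hu i, smul_dotProduct, dotProduct_comm z]
  rw [smul_eq_mul]
  ring

lemma ht_of_trivial {A : Matrix (Fin n) (Fin n) ℝ} (hA : A.IsHermitian) : Aᵀ = A := by
  rw [← conjTranspose_eq_transpose_of_trivial]; exact hA.eq

lemma spectral_core (G : Matrix (Fin n) (Fin n) ℝ) (hG : G.PosDef)
    (H : Matrix (Fin n) (Fin n) ℝ) (hH : H.PosSemidef)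
    (S : Matrix (Fin n) (Fin n) ℝ) (hS : S.PosSemidef) (hSsq : S * S = H)
    (ρ ξ : ℝ) (hρ : 0 < ρ)
    (hξ : ξ ≤ lambdaMinPos (S * (ρ⁻¹ • G + H)⁻¹ * S))
    (s : Fin n → ℝ) :
    max ξ 0 * ((S *ᵥ s) ⬝ᵥ (S *ᵥ s)) ≤ (S *ᵥ s) ⬝ᵥ (S * (ρ⁻¹ • G + H)⁻¹ * S) *ᵥ (S *ᵥ s) ∧
    ρ⁻¹ * ((S *ᵥ s) ⬝ᵥ (S * (ρ⁻¹ • G + H)⁻¹ * S) *ᵥ (S *ᵥ s)) ≤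
      (1 - max ξ 0) * ((S *ᵥ s) ⬝ᵥ (S * G⁻¹ * S) *ᵥ (S *ᵥ s)) := by
  set ξ' := max ξ 0 with hξ'def
  set K := (ρ⁻¹ • G + H)⁻¹ with hKdef
  set M := S * K * S with hMdef
  set B := S * G⁻¹ * S with hBdef
  set z := S *ᵥ s with hzdef
  -- basic positivity
  have hGsm : (ρ⁻¹ • G).PosDef := hG.smul (inv_pos.2 hρ)
  have hP : (ρ⁻¹ • G + H).PosDef := hGsm.add_posSemidef hH
  have hKpd : K.PosDef := hP.inv
  have hGi : G⁻¹.PosDef := hG.inv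
  have hSt : Sᵀ = S := ht_of_trivial hS.1
  have hKt : Kᵀ = K := ht_of_trivial hKpd.1
  have hGit : (G⁻¹)ᵀ = G⁻¹ := ht_of_trivial hGi.1
  have hKP : K * (ρ⁻¹ • G + H) = 1 := nonsing_inv_mul _ hP.det_pos.ne'.isUnit
  have hGG : G * G⁻¹ = 1 := mul_nonsing_inv _ hG.det_pos.ne'.isUnit
  have hBher : B.IsHermitian := by
    have := (hGi.posSemidef.mul_mul_conjTranspose_same S).1
    rwa [hS.1.eq] at this
  have hBpsd : B.PosSemidef := by
    have := hGi.posSemidef.mul_mul_conjTranspose_same S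
    rwa [hS.1.eq] at this
  have hMpsd : M.PosSemidef := by
    have := hKpd.posSemidef.mul_mul_conjTranspose_same S
    rwa [hS.1.eq] at this
  have hBt : Bᵀ = B := ht_of_trivial hBher
  have hMt : Mᵀ = M := ht_of_trivial hMpsd.1
  set b := hBher.eigenvalues with hbdef
  set u := hBher.eigenvectorBasis with hudef
  have hb0 : ∀ i, 0 ≤ b i := fun i => hBpsd.eigenvalues_nonneg i
  have hBu : ∀ i, B *ᵥ ⇑(u i) = b i • ⇑(u i) := fun i => hBher.mulVec_eigenvectorBasis i
  have hden : ∀ i, 0 < 1 + ρ * b i := fun i => by nlinarith [hb0 i]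
  set φ : Fin n → ℝ := fun i => ρ * b i / (1 + ρ * b i) with hφdef
  -- matrix identity M + ρ • (M * B) = ρ • B
  have hginv : ∀ X : Matrix (Fin n) (Fin n) ℝ, G * (G⁻¹ * X) = X := fun X => by
    rw [← Matrix.mul_assoc, hGG, one_mul]
  have h1 : K * G + ρ • (K * H) = ρ • 1 := by
    rw [← hKP, Matrix.mul_add, Matrix.mul_smul, smul_add, smul_smul,
      mul_inv_cancel₀ hρ.ne', one_smul]
  have hMid : M + ρ • (M * B) = ρ • B := by
    have e1 : M + ρ • (M * B) = S * ((K * G + ρ • (K * H)) * (G⁻¹ * S)) := by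
      rw [← hSsq]
      simp only [Matrix.add_mul, Matrix.mul_add, Matrix.smul_mul, Matrix.mul_smul,
        Matrix.mul_assoc, hginv, hMdef, hBdef]
    rw [e1, h1]
    simp only [Matrix.smul_mul, Matrix.one_mul, Matrix.mul_smul, hBdef, Matrix.mul_assoc]
  have hMu : ∀ i, M *ᵥ ⇑(u i) = φ i • ⇑(u i) := by
    intro i
    have h3 := congrArg (fun X => X *ᵥ ⇑(u i)) hMid
    simp only [add_mulVec, smul_mulVec, ← mulVec_mulVec] at h3
    rw [hBu i, mulVec_smul] at h3
    have h4 : (1 + ρ * b i) • (M *ᵥ ⇑(u i)) = (ρ * b i) • ⇑(u i) := by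
      rw [add_smul, one_smul, ← smul_smul, ← smul_smul]
      exact h3
    have h5 := congrArg (fun w => (1 + ρ * b i)⁻¹ • w) h4
    simp only [smul_smul] at h5
    rw [inv_mul_cancel₀ (hden i).ne', one_smul] at h5
    rw [h5]
    congr 1
    simp only [hφdef]
    field_simp
  have hξ2 : ξ ≤ sInf {t : ℝ | t ≠ 0 ∧ HasEigen M t} := hξ
  have hnorm : ∀ i, ⇑(u i) ⬝ᵥ ⇑(u i) = 1 := by
    intro i
    have h := orthonormal_iff_ite.mp u.orthonormal i i
    rw [if_pos rfl] at h
    have h3 : (inner ℝ (u i) (u i) : ℝ) = ⇑(u i) ⬝ᵥ ⇑(u i) := inner_eq_dot _ _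
    rw [← h3]
    exact h
  have hune : ∀ i, ⇑(u i) ≠ 0 := by
    intro i h
    have := hnorm i
    rw [h] at this
    simp at this
  have hbdd : BddBelow {t : ℝ | t ≠ 0 ∧ HasEigen M t} := by
    refine ⟨0, fun t ht => ?_⟩
    obtain ⟨-, v, hv0, hv⟩ := ht
    have h1 : 0 ≤ v ⬝ᵥ M *ᵥ v := by simpa using hMpsd.dotProduct_mulVec_nonneg v
    rw [hv, dotProduct_smul, smul_eq_mul] at h1
    have h2 : 0 < v ⬝ᵥ v := by
      have := dotProduct_star_self_pos_iff (v := v) |>.mpr hv0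
      simpa using this
    nlinarith
  have hxi' : ∀ i, b i ≠ 0 → ξ' ≤ φ i := by
    intro i hbne
    have hbpos : 0 < b i := lt_of_le_of_ne (hb0 i) (Ne.symm hbne)
    have hφpos : 0 < φ i := div_pos (mul_pos hρ hbpos) (hden i)
    have hmem : φ i ∈ {t : ℝ | t ≠ 0 ∧ HasEigen M t} := ⟨hφpos.ne', ⟨⇑(u i), hune i, hMu i⟩⟩
    exact max_le (le_trans hξ2 (csInf_le hbdd hmem)) hφpos.le
  have hSu0 : ∀ i, b i = 0 → S *ᵥ ⇑(u i) = 0 := by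
    intro i hb
    by_contra hne
    have hpos : 0 < star (S *ᵥ ⇑(u i)) ⬝ᵥ G⁻¹ *ᵥ (S *ᵥ ⇑(u i)) := hGi.dotProduct_mulVec_pos hne
    have hst : star (S *ᵥ ⇑(u i)) = S *ᵥ ⇑(u i) := by funext j; simp
    rw [hst] at hpos
    have hquad : ⇑(u i) ⬝ᵥ B *ᵥ ⇑(u i) = 0 := by
      rw [hBu i, dotProduct_smul, hb]; simp
    have heq : ⇑(u i) ⬝ᵥ B *ᵥ ⇑(u i) = (S *ᵥ ⇑(u i)) ⬝ᵥ G⁻¹ *ᵥ (S *ᵥ ⇑(u i)) := by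
      rw [hBdef, ← Matrix.mulVec_mulVec, ← Matrix.mulVec_mulVec, ← dot_symm S hSt]
    rw [heq] at hquad
    linarith
  set c : Fin n → ℝ := fun i => ⇑(u i) ⬝ᵥ z with hcdef
  have hzB : z ⬝ᵥ B *ᵥ z = ∑ i, b i * c i ^ 2 := quad_eigen B hBt u b hBu z
  have hzM : z ⬝ᵥ M *ᵥ z = ∑ i, φ i * c i ^ 2 := quad_eigen M hMt u φ hMu z
  have hzz : z ⬝ᵥ z = ∑ i, c i ^ 2 := by
    have h := quad_eigen 1 (by simp) u (fun _ => 1)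
      (fun i => by rw [one_mulVec, one_smul]) z
    rw [one_mulVec] at h
    simpa using h
  have hc0 : ∀ i, b i = 0 → c i = 0 := by
    intro i hb
    have h1 : S *ᵥ ⇑(u i) = 0 := hSu0 i hb
    have : c i = (S *ᵥ ⇑(u i)) ⬝ᵥ s := by
      rw [hcdef]
      exact (dot_symm S hSt _ _).symm
    rw [this, h1, zero_dotProduct]
  constructor
  · rw [hzz, hzM, Finset.mul_sum]
    refine Finset.sum_le_sum fun i _ => ?_
    rcases eq_or_ne (b i) 0 with hb | hb
    · rw [hc0 i hb]
      simp [hφdef]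
    · have := hxi' i hb
      nlinarith [sq_nonneg (c i)]
  · rw [hzM, hzB, Finset.mul_sum, Finset.mul_sum]
    refine Finset.sum_le_sum fun i _ => ?_
    rcases eq_or_ne (b i) 0 with hb | hb
    · simp [hφdef, hb]
    · have h1 := hxi' i hb
      have h2 : ρ⁻¹ * φ i = (1 - φ i) * b i := by
        simp only [hφdef]
        field_simp [(hden i).ne']
        ring
      have h3 : 0 ≤ b i * c i ^ 2 := mul_nonneg (hb0 i) (sq_nonneg _)
      nlinarith

lemma star_id (v : Fin n → ℝ) : star v = v := by funext j; simp

set_option maxHeartbeats 3000000 in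
/-- One-step Lyapunov contraction of the Augmented Newton method. -/
theorem augmented_newton_contraction {n : ℕ}
    (f : (Fin n → ℝ) → ℝ) (g : (Fin n → ℝ) → (Fin n → ℝ))
    (Hess : (Fin n → ℝ) → Matrix (Fin n) (Fin n) ℝ)
    (G : Matrix (Fin n) (Fin n) ℝ) (hG : G.PosDef)
    (μ L ρ ξ : ℝ) (hμ : 0 < μ) (hμL : μ ≤ L) (hρ : 0 < ρ)
    (hHess : ∀ y, (Hess y).PosSemidef)
    (hrange : ∀ y, g y ∈ LinearMap.range (Hess y).mulVecLin)
    (hsmooth : ∀ x y, f x ≤ f y + g y ⬝ᵥ (x - y) + L / 2 * ((x - y) ⬝ᵥ (Hess y).mulVec (x - y)))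
    (hconv : ∀ x y, f x ≥ f y + g y ⬝ᵥ (x - y) + μ / 2 * ((x - y) ⬝ᵥ (Hess y).mulVec (x - y)))
    (xstar : Fin n → ℝ) (fstar : ℝ) (hstar : f xstar = fstar) (hmin : ∀ x, fstar ≤ f x)
    (hξ : ∀ x, ξ ≤ lambdaMinPos ((hHess x).sqrt * (ρ⁻¹ • G + Hess x)⁻¹ * (hHess x).sqrt))
    (xk xkm : Fin n → ℝ)
    (hmom : G.mulVec (xk - xkm) ∈ LinearMap.range (Hess xk).mulVecLin) :
    f (xk - ((ρ⁻¹ • G + Hess xk)⁻¹).mulVec (L⁻¹ • g xk - ρ⁻¹ • G.mulVec (xk - xkm))) - fstar +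
      L / (2 * ρ) *
        ((xk - ((ρ⁻¹ • G + Hess xk)⁻¹).mulVec (L⁻¹ • g xk - ρ⁻¹ • G.mulVec (xk - xkm)) - xk) ⬝ᵥ
          G.mulVec (xk - ((ρ⁻¹ • G + Hess xk)⁻¹).mulVec (L⁻¹ • g xk - ρ⁻¹ • G.mulVec (xk - xkm)) - xk)) ≤
    (1 - ξ * μ / L) *
      (f xk - fstar + L / (2 * ρ) * ((xk - xkm) ⬝ᵥ G.mulVec (xk - xkm))) := by
  have hL : 0 < L := lt_of_lt_of_le hμ hμL
  set d := xk - xkm with hd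
  set gk := g xk with hgkdef
  set H := Hess xk with hHdef
  have hHpsd : H.PosSemidef := hHess xk
  set S := (hHess xk).sqrt with hSdef
  have hSpsd : S.PosSemidef := (hHess xk).posSemidef_sqrt
  have hSsq : S * S = H := (hHess xk).sqrt_mul_self
  set w := G *ᵥ d with hwdef
  set u := L⁻¹ • gk - ρ⁻¹ • w with hudef
  set K := (ρ⁻¹ • G + H)⁻¹ with hKdef
  -- positivity facts
  have hGsm : (ρ⁻¹ • G).PosDef := hG.smul (inv_pos.2 hρ)
  have hPpd : (ρ⁻¹ • G + H).PosDef := hGsm.add_posSemidef hHpsd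
  have hKpd : K.PosDef := hPpd.inv
  have hKt : Kᵀ = K := ht_of_trivial hKpd.1
  have hGt : Gᵀ = G := ht_of_trivial hG.1
  have hHt : Hᵀ = H := ht_of_trivial hHpsd.1
  have hSt : Sᵀ = S := ht_of_trivial hSpsd.1
  have hPK : (ρ⁻¹ • G + H) * K = 1 := mul_nonsing_inv _ hPpd.det_pos.ne'.isUnit
  have hGiG : G⁻¹ * G = 1 := nonsing_inv_mul _ hG.det_pos.ne'.isUnit
  -- the gradient is in the range of H
  obtain ⟨s, hs⟩ := hrange xk
  rw [Matrix.mulVecLin_apply] at hs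
  rw [← hHdef, ← hgkdef] at hs
  obtain ⟨s₂, hs₂⟩ := hmom
  rw [Matrix.mulVecLin_apply] at hs₂
  -- hs : H *ᵥ s = gk, hs₂ : H *ᵥ s₂ = w
  -- goal massage
  rw [sub_sub_cancel_left, Matrix.mulVec_neg, dotProduct_neg, neg_dotProduct, neg_neg]
  set ξ' := max ξ 0 with hξ'def
  -- spectral facts
  have hcoreA := spectral_core G hG H hHpsd S hSpsd hSsq ρ ξ hρ (hξ xk) s
  have hcoreB := spectral_core G hG H hHpsd S hSpsd hSsq ρ ξ hρ (hξ xk) s₂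
  rw [← hKdef, ← hξ'def] at hcoreA hcoreB
  -- bridges
  have hbr1 : ∀ v : Fin n → ℝ, v ⬝ᵥ H *ᵥ v = (S *ᵥ v) ⬝ᵥ (S *ᵥ v) := by
    intro v
    rw [← hSsq, ← Matrix.mulVec_mulVec, ← dot_symm S hSt]
  have hbr2 : ∀ v : Fin n → ℝ,
      (H *ᵥ v) ⬝ᵥ K *ᵥ (H *ᵥ v) = (S *ᵥ v) ⬝ᵥ (S * K * S) *ᵥ (S *ᵥ v) := by
    intro v
    rw [← hSsq, ← Matrix.mulVec_mulVec, ← Matrix.mulVec_mulVec, ← Matrix.mulVec_mulVec,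
      ← dot_symm S hSt]
  have hbr3 : d ⬝ᵥ w = (S *ᵥ s₂) ⬝ᵥ (S * G⁻¹ * S) *ᵥ (S *ᵥ s₂) := by
    have e1 : S *ᵥ S *ᵥ s₂ = w := by rw [Matrix.mulVec_mulVec, hSsq, hs₂]
    have e2 : G⁻¹ *ᵥ w = d := by rw [hwdef, Matrix.mulVec_mulVec, hGiG, one_mulVec]
    rw [← Matrix.mulVec_mulVec, ← Matrix.mulVec_mulVec, ← dot_symm S hSt, e1, e2,
      dotProduct_comm]
  -- scalar versions of spectral facts
  have factA : ξ' * (s ⬝ᵥ H *ᵥ s) ≤ gk ⬝ᵥ K *ᵥ gk := by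
    have := hcoreA.1
    rw [← hbr2 s, hs, ← hbr1 s] at this
    exact this
  have factB : ρ⁻¹ * (w ⬝ᵥ K *ᵥ w) ≤ (1 - ξ') * (d ⬝ᵥ w) := by
    have := hcoreB.2
    rw [← hbr2 s₂, hs₂, ← hbr3] at this
    exact this
  clear_value d gk H S w u K ξ'
  clear hbr1 hbr2 hbr3 hcoreA hcoreB
  -- nonnegativity
  have hξ'0 : (0:ℝ) ≤ ξ' := by rw [hξ'def]; exact le_max_right ξ 0
  have hF0 : (0:ℝ) ≤ f xk - fstar := by linarith [hmin xk]
  have hA40 : (0:ℝ) ≤ d ⬝ᵥ w := by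
    have h := hG.posSemidef.dotProduct_mulVec_nonneg d
    rw [star_id] at h
    rw [← hwdef] at h
    exact h
  -- convexity bound : f xk - fstar ≤ 1/(2 μ) sᵀ H s
  have hconvF : f xk - fstar ≤ 1/(2*μ) * (s ⬝ᵥ H *ᵥ s) := by
    have hcv := hconv xstar xk
    rw [hstar, ← hgkdef, ← hHdef] at hcv
    have hpsd0 := hHpsd.dotProduct_mulVec_nonneg ((xstar - xk) + μ⁻¹ • s)
    rw [star_id] at hpsd0
    have hgs : gk ⬝ᵥ (xstar - xk) = s ⬝ᵥ H *ᵥ (xstar - xk) := by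
      rw [← hs, ← dot_symm H hHt]
    have hswap : (xstar - xk) ⬝ᵥ H *ᵥ s = s ⬝ᵥ H *ᵥ (xstar - xk) := by
      rw [dotProduct_comm, dot_symm H hHt]
    have hexp : ((xstar - xk) + μ⁻¹ • s) ⬝ᵥ H *ᵥ ((xstar - xk) + μ⁻¹ • s)
        = (xstar - xk) ⬝ᵥ H *ᵥ (xstar - xk) + 2 * μ⁻¹ * (s ⬝ᵥ H *ᵥ (xstar - xk))
          + μ⁻¹^2 * (s ⬝ᵥ H *ᵥ s) := by
      simp only [mulVec_add, mulVec_smul, dotProduct_add, add_dotProduct, dotProduct_smul,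
        smul_dotProduct, smul_eq_mul]
      rw [hswap]
      ring
    rw [hexp] at hpsd0
    have h3 : 0 ≤ μ/2 * ((xstar - xk) ⬝ᵥ H *ᵥ (xstar - xk) + 2 * μ⁻¹ * (s ⬝ᵥ H *ᵥ (xstar - xk))
        + μ⁻¹^2 * (s ⬝ᵥ H *ᵥ s)) := mul_nonneg (by positivity) hpsd0
    have h4 : μ/2 * ((xstar - xk) ⬝ᵥ H *ᵥ (xstar - xk) + 2 * μ⁻¹ * (s ⬝ᵥ H *ᵥ (xstar - xk))
        + μ⁻¹^2 * (s ⬝ᵥ H *ᵥ s))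
        = μ/2 * ((xstar - xk) ⬝ᵥ H *ᵥ (xstar - xk)) + s ⬝ᵥ H *ᵥ (xstar - xk)
          + 1/(2*μ) * (s ⬝ᵥ H *ᵥ s) := by
      field_simp
    rw [h4] at h3
    rw [hgs] at hcv
    linarith
  -- gradient decomposition
  have hgk2 : gk = L • u + (L * ρ⁻¹) • w := by
    rw [hudef, smul_sub, smul_smul, smul_smul, mul_inv_cancel₀ hL.ne', one_smul,
      sub_add_cancel]
  -- smoothness step
  have hsm := hsmooth (xk - K *ᵥ u) xk
  rw [← hgkdef, ← hHdef] at hsm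
  rw [sub_sub_cancel_left] at hsm
  simp only [mulVec_neg, dotProduct_neg, neg_dotProduct, neg_neg] at hsm
  -- P δ = u identities
  have hPdelta : H *ᵥ (K *ᵥ u) + ρ⁻¹ • (G *ᵥ (K *ᵥ u)) = u := by
    have h1 : (ρ⁻¹ • G + H) *ᵥ (K *ᵥ u) = u := by
      rw [Matrix.mulVec_mulVec, hPK, one_mulVec]
    rw [add_mulVec, smul_mulVec, add_comm] at h1
    exact h1
  have hq1 : (K *ᵥ u) ⬝ᵥ H *ᵥ (K *ᵥ u) + ρ⁻¹ * ((K *ᵥ u) ⬝ᵥ G *ᵥ (K *ᵥ u)) = u ⬝ᵥ K *ᵥ u := by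
    have e : (K *ᵥ u) ⬝ᵥ (H *ᵥ (K *ᵥ u) + ρ⁻¹ • (G *ᵥ (K *ᵥ u))) = (K *ᵥ u) ⬝ᵥ u := by
      rw [hPdelta]
    rw [dotProduct_add, dotProduct_smul, smul_eq_mul] at e
    rw [e]
    exact dot_symm K hKt u u
  have hq1L : L/2 * ((K *ᵥ u) ⬝ᵥ H *ᵥ (K *ᵥ u)) + L/(2*ρ) * ((K *ᵥ u) ⬝ᵥ G *ᵥ (K *ᵥ u))
      = L/2 * (u ⬝ᵥ K *ᵥ u) := by
    rw [← hq1]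
    field_simp
  have hgdot : gk ⬝ᵥ (K *ᵥ u) = L * (u ⬝ᵥ K *ᵥ u) + (L * ρ⁻¹) * (w ⬝ᵥ K *ᵥ u) := by
    rw [hgk2, add_dotProduct, smul_dotProduct, smul_dotProduct, smul_eq_mul, smul_eq_mul]
  have hcross : u ⬝ᵥ K *ᵥ w = w ⬝ᵥ K *ᵥ u := by
    rw [← dot_symm K hKt, dotProduct_comm]
  have hgKg : gk ⬝ᵥ K *ᵥ gk = L^2 * (u ⬝ᵥ K *ᵥ u) + 2*(L^2*ρ⁻¹)*(w ⬝ᵥ K *ᵥ u)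
      + (L^2*ρ⁻¹^2)*(w ⬝ᵥ K *ᵥ w) := by
    rw [hgk2]
    simp only [mulVec_add, mulVec_smul, dotProduct_add, add_dotProduct, dotProduct_smul,
      smul_dotProduct, smul_eq_mul]
    rw [hcross]
    ring
  -- key inequality
  have key : (ξ'*μ/L) * (f xk - fstar) ≤ L/2 * (u ⬝ᵥ K *ᵥ u) + (L*ρ⁻¹) * (w ⬝ᵥ K *ᵥ u)
      + (1 - ξ'*μ/L)*(L/(2*ρ))*(d ⬝ᵥ w) := by
    have hc'0 : (0:ℝ) ≤ ξ'*μ/L := by positivity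
    have c1 : (ξ'*μ/L) * (f xk - fstar) ≤ (ξ'/(2*L)) * (s ⬝ᵥ H *ᵥ s) := by
      have e : (ξ'*μ/L) * (1/(2*μ)) = ξ'/(2*L) := by
        field_simp
      calc (ξ'*μ/L) * (f xk - fstar) ≤ (ξ'*μ/L) * (1/(2*μ) * (s ⬝ᵥ H *ᵥ s)) :=
            mul_le_mul_of_nonneg_left hconvF hc'0
        _ = (ξ'/(2*L)) * (s ⬝ᵥ H *ᵥ s) := by rw [← mul_assoc, e]
    have c2 : (ξ'/(2*L)) * (s ⬝ᵥ H *ᵥ s) ≤ 1/(2*L) * (gk ⬝ᵥ K *ᵥ gk) := by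
      have e2 : (ξ'/(2*L)) * (s ⬝ᵥ H *ᵥ s) = 1/(2*L) * (ξ' * (s ⬝ᵥ H *ᵥ s)) := by ring
      rw [e2]
      exact mul_le_mul_of_nonneg_left factA (by positivity)
    have c3 : 1/(2*L) * (gk ⬝ᵥ K *ᵥ gk) = L/2 * (u ⬝ᵥ K *ᵥ u) + (L*ρ⁻¹) * (w ⬝ᵥ K *ᵥ u)
        + (L*ρ⁻¹^2/2) * (w ⬝ᵥ K *ᵥ w) := by
      rw [hgKg]
      field_simp
    have c4 : (L*ρ⁻¹^2/2) * (w ⬝ᵥ K *ᵥ w) ≤ (L*ρ⁻¹/2) * ((1-ξ') * (d ⬝ᵥ w)) := by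
      have e2 : (L*ρ⁻¹^2/2) * (w ⬝ᵥ K *ᵥ w) = (L*ρ⁻¹/2) * (ρ⁻¹ * (w ⬝ᵥ K *ᵥ w)) := by ring
      rw [e2]
      exact mul_le_mul_of_nonneg_left factB (by positivity)
    have hc'le : ξ'*μ/L ≤ ξ' := by
      rw [div_le_iff₀ hL]
      nlinarith
    have c5 : (L*ρ⁻¹/2) * ((1-ξ') * (d ⬝ᵥ w)) ≤ (1 - ξ'*μ/L)*(L/(2*ρ))*(d ⬝ᵥ w) := by
      have e : (L*ρ⁻¹/2) = L/(2*ρ) := by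
        rw [div_eq_mul_inv L (2*ρ), mul_inv]
        ring
      rw [e]
      have h6 : (0:ℝ) ≤ L/(2*ρ) * (d ⬝ᵥ w) := mul_nonneg (by positivity) hA40
      nlinarith [h6, hc'le]
    linarith
  -- put everything together
  have main : f (xk - K *ᵥ u) - fstar + L/(2*ρ) * ((K *ᵥ u) ⬝ᵥ G *ᵥ (K *ᵥ u))
      ≤ (1 - ξ'*μ/L) * (f xk - fstar + L/(2*ρ) * (d ⬝ᵥ w)) := by
    linarith [hsm, hgdot, hq1L, key]
  have hVpos : 0 ≤ f xk - fstar + L/(2*ρ) * (d ⬝ᵥ w) := by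
    have := mul_nonneg (le_of_lt (show (0:ℝ) < L/(2*ρ) by positivity)) hA40
    linarith
  have hξξ' : ξ ≤ ξ' := by rw [hξ'def]; exact le_max_left ξ 0
  have hh : 0 ≤ ((ξ' - ξ) * μ / L) * (f xk - fstar + L/(2*ρ) * (d ⬝ᵥ w)) :=
    mul_nonneg (div_nonneg (mul_nonneg (sub_nonneg.2 hξξ') hμ.le) hL.le) hVpos
  have expand : (1 - ξ*μ/L) * (f xk - fstar + L/(2*ρ) * (d ⬝ᵥ w))
      = (1 - ξ'*μ/L) * (f xk - fstar + L/(2*ρ) * (d ⬝ᵥ w))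
        + ((ξ' - ξ) * μ / L) * (f xk - fstar + L/(2*ρ) * (d ⬝ᵥ w)) := by ring
  linarith [main, hh, expand]
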